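/- Let Y be an invertible symmetric n×n real matrix depending on the symmetric complex matrix Z via Y = Im Z, and R = Y^{-1}. Then ∂R_{st}/∂Z_{kl} = 2^{−δ(k,l)−1}·i·(R_{kt}R_{sl} + R_{ks}R_{tl}), where ∂/∂Z_{kl} denotes the Wirtinger derivative and δ is the Kronecker delta (the variables Z_{kl} for k ≤ l, with Z symmetric). -/

import Mathlib

open Complex Matrix

/-- The Wirtinger derivative ∂/∂ζ of a function ℂ → ℂ (viewed as ℝ-differentiable). -/
noncomputable def wirtinger (g : ℂ → ℂ) (ζ : ℂ) : ℂ :=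
  ((fderiv ℝ g ζ) 1 - Complex.I * (fderiv ℝ g ζ) Complex.I) / 2

/-- The symmetric elementary matrix associated with the entry pair (k,l). -/
def symBasis (n : ℕ) (k l : Fin n) : Matrix (Fin n) (Fin n) ℝ :=
  Matrix.of fun a b => if (a = k ∧ b = l) ∨ (a = l ∧ b = k) then (1 : ℝ) else 0

attribute [local instance] Matrix.linftyOpNormedRing Matrix.linftyOpNormedAlgebra

section aux
variable {n : ℕ}

lemma symBasis_diag (k : Fin n) : symBasis n k k = Matrix.single k k 1 := by
  ext a b
  simp only [symBasis, Matrix.single, of_apply]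
  aesop

lemma symBasis_off {k l : Fin n} (h : k ≠ l) :
    symBasis n k l = Matrix.single k l 1 + Matrix.single l k 1 := by
  ext a b
  simp only [symBasis, Matrix.single, of_apply, Matrix.add_apply]
  by_cases h1 : a = k <;> by_cases h2 : b = l <;> by_cases h3 : a = l <;> by_cases h4 : b = k <;>
    simp_all <;> aesop

lemma triple_entry (A B : Matrix (Fin n) (Fin n) ℝ) (k l s t : Fin n) :
    (A * Matrix.single k l (1 : ℝ) * B) s t = A s k * B l t := by
  rw [Matrix.mul_assoc, Matrix.mul_apply]
  rw [Finset.sum_eq_single k]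
  · simp
  · intro b _ hb
    rw [Matrix.single_mul_apply_of_ne _ _ _ _ _ hb, mul_zero]
  · simp

/-- The entry continuous linear map. -/
noncomputable def entryCLM (s t : Fin n) : Matrix (Fin n) (Fin n) ℝ →L[ℝ] ℝ :=
  LinearMap.toContinuousLinearMap
    { toFun := fun M => M s t
      map_add' := fun _ _ => rfl
      map_smul' := fun _ _ => rfl }

end aux

/-- with Y = Im Z symmetric invertible and R = Y⁻¹, the Wirtinger
derivative ∂R_{st}/∂Z_{kl} (obtained by varying the symmetric entry pair (k,l) of Z)
equals 2^{−δ(k,l)−1}·i·(R_{kt}R_{sl} + R_{ks}R_{tl}). -/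
theorem inverse_Y_wirtinger_deriv (n : ℕ) (Y : Matrix (Fin n) (Fin n) ℝ)
    (hsym : Y.IsSymm) (hinv : IsUnit Y.det) (k l s t : Fin n) :
    wirtinger (fun ζ : ℂ => (((Y + ζ.im • symBasis n k l)⁻¹ s t : ℝ) : ℂ)) 0 =
      (2 : ℂ) ^ (-(if k = l then (1 : ℤ) else 0) - 1) * Complex.I *
        (((Y⁻¹ k t : ℝ) : ℂ) * ((Y⁻¹ s l : ℝ) : ℂ)
          + ((Y⁻¹ k s : ℝ) : ℂ) * ((Y⁻¹ t l : ℝ) : ℂ)) := by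
  set E := symBasis n k l with hE
  set R := Y⁻¹ with hR
  have hYu : IsUnit Y := (Matrix.isUnit_iff_isUnit_det Y).mpr hinv
  -- derivative of the affine path
  have hpath : HasDerivAt (fun ε : ℝ => Y + ε • E) E 0 := by
    have h := ((hasDerivAt_id (0:ℝ)).smul_const E).const_add Y
    simp only [id, one_smul] at h; exact h
  -- derivative of Ring.inverse at Y
  have hinvY : HasFDerivAt Ring.inverse
      (-(ContinuousLinearMap.mulLeftRight ℝ (Matrix (Fin n) (Fin n) ℝ) R R)) Y := by
    have := hasFDerivAt_ringInverse (𝕜 := ℝ) hYu.unit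
    rwa [Matrix.coe_units_inv, hYu.unit_spec] at this
  -- derivative of inverse along the path
  have hinvY' : HasFDerivAt Ring.inverse
      (-(ContinuousLinearMap.mulLeftRight ℝ (Matrix (Fin n) (Fin n) ℝ) R R)) (Y + (0:ℝ) • E) := by
    rw [zero_smul, add_zero]; exact hinvY
  have hcomp : HasDerivAt (fun ε : ℝ => Ring.inverse (Y + ε • E)) (-(R * E * R)) 0 := by
    have h := hinvY'.comp_hasDerivAt 0 hpath
    exact h
  set c0 : ℝ := -((R * E * R) s t) with hc0
  have hfun : (fun ε : ℝ => (Y + ε • E)⁻¹ s t)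
      = fun ε : ℝ => entryCLM s t (Ring.inverse (Y + ε • E)) := by
    funext ε; rw [Matrix.nonsing_inv_eq_ringInverse]; rfl
  have hg : HasDerivAt (fun ε : ℝ => (Y + ε • E)⁻¹ s t) c0 0 := by
    rw [hfun, hc0]
    have h := (entryCLM s t).hasFDerivAt.comp_hasDerivAt 0 hcomp
    exact h
  -- the complex function
  have hF : HasFDerivAt (fun ζ : ℂ => (((Y + ζ.im • E)⁻¹ s t : ℝ) : ℂ))
      ((Complex.ofRealCLM.comp ((1 : ℝ →L[ℝ] ℝ).smulRight c0)).comp Complex.imCLM) 0 := by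
    have h1 : HasFDerivAt (fun ε : ℝ => (Y + ε • E)⁻¹ s t)
        ((1 : ℝ →L[ℝ] ℝ).smulRight c0) ((Complex.imCLM) (0:ℂ)) := by
      simpa [ContinuousLinearMap.smulRight_one_eq_toSpanSingleton] using hg.hasFDerivAt
    exact (Complex.ofRealCLM.hasFDerivAt.comp _ (h1.comp _ Complex.imCLM.hasFDerivAt))
  have hfd := hF.fderiv
  rw [wirtinger, hfd]
  have hval : ∀ v : ℂ,
      ((Complex.ofRealCLM.comp ((1 : ℝ →L[ℝ] ℝ).smulRight c0)).comp Complex.imCLM) v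
        = ((v.im * c0 : ℝ) : ℂ) := by
    intro v; simp [smul_eq_mul]
  rw [hval 1, hval Complex.I]
  simp only [Complex.one_im, Complex.I_im, zero_mul, one_mul, Complex.ofReal_zero, zero_sub]
  -- symmetry of R
  have hRsymm : R.IsSymm := by
    rw [hR, Matrix.IsSymm, Matrix.transpose_nonsing_inv, hsym.eq]
  have hRs : ∀ a b : Fin n, R a b = R b a := fun a b => hRsymm.apply b a
  by_cases hkl : k = l
  · subst hkl
    have hc : c0 = -(R s k * R k t) := by
      rw [hc0, hE, symBasis_diag, triple_entry]
    rw [hc, if_pos rfl]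
    rw [hRs k t, hRs t k, hRs s k]
    push_cast
    norm_num [_root_.zpow_neg]
    ring
  · have hc : c0 = -(R s k * R l t + R s l * R k t) := by
      rw [hc0, hE, symBasis_off hkl, Matrix.mul_add, Matrix.add_mul, Matrix.add_apply,
        triple_entry, triple_entry]
    rw [hc, if_neg hkl]
    rw [hRs k t, hRs s l, hRs k s, hRs t l]
    push_cast
    norm_num [_root_.zpow_neg]
    ring
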